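/- Let H be a complex Hilbert space, A ∈ B(H), and n ≥ 2 an integer such that Aⁿ = A*A. Then ker A* = ker A. -/

import Mathlib

open ContinuousLinearMap Complex

variable {H : Type*} [NormedAddCommGroup H] [InnerProductSpace ℂ H] [CompleteSpace H]

theorem stmt3 (A : H →L[ℂ] H) (n : ℕ) (hn : 2 ≤ n) (h : A ^ n = adjoint A * A) :
    LinearMap.ker (adjoint A : H →ₗ[ℂ] H) = LinearMap.ker (A : H →ₗ[ℂ] H) := by
  have aux : ∀ (B : H →L[ℂ] H) (x : H), adjoint B (B x) = 0 → B x = 0 := by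
    intro B x hx
    have hin : (inner ℂ (B x) (B x) : ℂ) = 0 := by
      rw [← ContinuousLinearMap.adjoint_inner_left, hx, inner_zero_left]
    exact inner_self_eq_zero.mp hin
  have h' : (adjoint A) ^ n = adjoint A * A := by
    have := congrArg star h
    simpa only [star_pow, star_mul, star_eq_adjoint, adjoint_adjoint] using this
  obtain ⟨m, rfl⟩ : ∃ m, n = m + 1 := ⟨n - 1, by omega⟩
  have hd1 : ∀ y : H, adjoint A y = 0 → A y = 0 := by
    intro y hy
    apply aux A
    rw [← ContinuousLinearMap.mul_apply, ← h', pow_succ, ContinuousLinearMap.mul_apply, hy, map_zero]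
  have hd2 : ∀ y : H, A y = 0 → adjoint A y = 0 := by
    intro y hy
    have hpow : ((adjoint A) ^ (m + 1)) y = 0 := by
      rw [h', ← h, pow_succ, ContinuousLinearMap.mul_apply, hy, map_zero]
    have descent : ∀ k : ℕ, ((adjoint A) ^ (k + 1)) y = 0 → adjoint A y = 0 := by
      intro k
      induction k with
      | zero => intro hk; simpa using hk
      | succ k ih =>
        intro hk
        apply ih
        have hz : adjoint A (((adjoint A) ^ (k + 1)) y) = 0 := by
          rw [← ContinuousLinearMap.mul_apply, ← pow_succ']
          exact hk
        have hAz : A (((adjoint A) ^ (k + 1)) y) = 0 := hd1 _ hz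
        have hAz' : A (adjoint A (((adjoint A) ^ k) y)) = 0 := by
          simpa only [pow_succ', ContinuousLinearMap.mul_apply] using hAz
        have hfin := aux (adjoint A) (((adjoint A) ^ k) y) (by rwa [adjoint_adjoint])
        rw [pow_succ', ContinuousLinearMap.mul_apply]
        exact hfin
    exact descent m hpow
  ext y
  simp only [LinearMap.mem_ker, ContinuousLinearMap.coe_coe]
  exact ⟨fun hy => hd1 y hy, fun hy => hd2 y hy⟩
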